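/- Suppose k divides n, n > k ≥ 1. Then for any simple graph G on n vertices, the number of unordered pairs {x,y} with |deg(x) − deg(y)| < k is at least (n/k)·C(k,2) + 1. -/

import Mathlib

open scoped Classical
open Finset

theorem convex_aux (m k : ℕ) (f : ℕ → ℕ) (hsum : ∑ b ∈ range m, f b = m * k)
    (b0 : ℕ) (hb0 : b0 ∈ range m) (hne : f b0 ≠ k) :
    m * (k * k) + 2 ≤ ∑ b ∈ range m, f b * f b := by
  set g : ℕ → ℤ := fun b => (f b : ℤ) - k with hg
  have hfsumZ : ∑ b ∈ range m, (f b : ℤ) = (m : ℤ) * k := by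
    rw [← Nat.cast_sum, hsum]; push_cast; ring
  have hgsum : ∑ b ∈ range m, g b = 0 := by
    simp only [hg, Finset.sum_sub_distrib, Finset.sum_const, card_range, nsmul_eq_mul, hfsumZ]
    ring
  have hgb0 : g b0 ≠ 0 := by simp only [hg]; intro h; apply hne; omega
  obtain ⟨b1, hb1, hb1ne, hgb1⟩ : ∃ b1 ∈ range m, b1 ≠ b0 ∧ g b1 ≠ 0 := by
    by_contra hcon
    push_neg at hcon
    have : ∑ b ∈ range m, g b = g b0 :=
      Finset.sum_eq_single b0 (fun b hb hbne => hcon b hb hbne) (fun h => absurd hb0 h)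
    exact hgb0 (this ▸ hgsum)
  have hsq : ∀ b, g b ≠ 0 → 1 ≤ g b ^ 2 := by
    intro b hb
    rcases lt_or_gt_of_ne hb with h | h <;> nlinarith
  have hpair : 2 ≤ ∑ b ∈ range m, g b ^ 2 := by
    have h1 : ∑ b ∈ ({b0, b1} : Finset ℕ), g b ^ 2 ≤ ∑ b ∈ range m, g b ^ 2 := by
      apply Finset.sum_le_sum_of_subset_of_nonneg
      · intro b hb; simp at hb; rcases hb with rfl | rfl; exacts [hb0, hb1]
      · intro b _ _; positivity
    rw [Finset.sum_pair hb1ne.symm] at h1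
    have := hsq b0 hgb0
    have := hsq b1 hgb1
    linarith
  have hexp : ∑ b ∈ range m, g b ^ 2 =
      (∑ b ∈ range m, (f b : ℤ) * f b) - 2 * k * (∑ b ∈ range m, (f b : ℤ)) +
        m * (k * k) := by
    have hc : ∀ b ∈ range m, g b ^ 2 = (f b : ℤ) * f b - 2 * k * f b + k * k := by
      intro b _; simp only [hg]; ring
    rw [Finset.sum_congr rfl hc, Finset.sum_add_distrib, Finset.sum_sub_distrib,
      Finset.sum_const, card_range, ← Finset.mul_sum, nsmul_eq_mul]
    try ring
  have : (m : ℤ) * (k * k) + 2 ≤ ∑ b ∈ range m, (f b : ℤ) * f b := by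
    rw [hexp, hfsumZ] at hpair; linarith
  have hcast : (∑ b ∈ range m, (f b : ℤ) * f b) = ((∑ b ∈ range m, f b * f b : ℕ) : ℤ) := by
    push_cast; rfl
  rw [hcast] at this
  exact_mod_cast this

/-- Number of unordered pairs of distinct vertices whose degrees differ by less than `k`. -/
noncomputable def closeCount (n k : ℕ) (G : SimpleGraph (Fin n)) : ℕ :=
  (Finset.univ.filter (fun p : Fin n × Fin n =>
    p.1 < p.2 ∧ |(G.degree p.1 : ℤ) - (G.degree p.2 : ℤ)| < k)).card

theorem stmt_7 (n k : ℕ) (hk : 1 ≤ k) (hnk : k < n) (hdvd : k ∣ n)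
    (G : SimpleGraph (Fin n)) :
    (n / k) * Nat.choose k 2 + 1 ≤ closeCount n k G := by
  have hk0 : 0 < k := hk
  obtain ⟨m, hm⟩ := hdvd   -- n = k * m
  have hmk : n = m * k := by rw [hm]; ring
  have hdivk : n / k = m := by rw [hmk, Nat.mul_div_cancel _ hk0]
  have hm2 : 2 ≤ m := by nlinarith
  have hn0 : 0 < n := by omega
  set d : Fin n → ℕ := fun v => G.degree v with hd
  have hdlt : ∀ v, d v < n := by
    intro v; simpa using G.degree_lt_card_verts v
  obtain ⟨v0, -, hv0⟩ := Finset.exists_min_image (univ : Finset (Fin n)) d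
    ⟨⟨0, hn0⟩, mem_univ _⟩
  set a : ℕ := d v0 with hadef
  have ha : ∀ v, a ≤ d v := fun v => hv0 v (mem_univ v)
  set B : Fin n → ℕ := fun v => (d v - a) / k with hB
  have hBlt : ∀ v, B v < m := by
    intro v
    rw [hB]
    rw [Nat.div_lt_iff_lt_mul hk0, ← hmk]
    have := hdlt v
    omega
  have hBclose : ∀ u v : Fin n, B u = B v → |(d u : ℤ) - (d v : ℤ)| < k := by
    intro u v h
    simp only [hB] at h
    have h1 := Nat.div_add_mod (d u - a) k
    have h2 := Nat.div_add_mod (d v - a) k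
    have h3 := Nat.mod_lt (d u - a) hk0
    have h4 := Nat.mod_lt (d v - a) hk0
    rw [h] at h1
    have hu := ha u
    have hv := ha v
    rw [abs_lt]
    omega
  -- the main sets
  set C2 := Finset.univ.filter (fun p : Fin n × Fin n =>
      p.1 ≠ p.2 ∧ |(d p.1 : ℤ) - (d p.2 : ℤ)| < k) with hC2
  set D := Finset.univ.filter (fun p : Fin n × Fin n =>
      p.1 ≠ p.2 ∧ B p.1 = B p.2) with hD
  set fib : ℕ → Finset (Fin n) := fun b => univ.filter (fun v => B v = b) with hfib
  have hDsub : D ⊆ C2 := by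
    intro p hp
    simp only [hD, mem_filter, mem_univ, true_and] at hp
    simp only [hC2, mem_filter, mem_univ, true_and]
    exact ⟨hp.1, hBclose _ _ hp.2⟩
  -- doubling
  have hdouble : C2.card = 2 * closeCount n k G := by
    set Clt := Finset.univ.filter (fun p : Fin n × Fin n =>
        p.1 < p.2 ∧ |(d p.1 : ℤ) - (d p.2 : ℤ)| < k) with hClt
    set Cgt := Finset.univ.filter (fun p : Fin n × Fin n =>
        p.2 < p.1 ∧ |(d p.1 : ℤ) - (d p.2 : ℤ)| < k) with hCgt
    have hcc : closeCount n k G = Clt.card := by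
      rw [closeCount, hClt]
    have hunion : C2 = Clt ∪ Cgt := by
      ext p
      simp only [hC2, hClt, hCgt, mem_union, mem_filter, mem_univ, true_and]
      constructor
      · rintro ⟨hne, hc⟩
        rcases lt_or_gt_of_ne hne with h | h
        · exact Or.inl ⟨h, hc⟩
        · exact Or.inr ⟨h, hc⟩
      · rintro (⟨h, hc⟩ | ⟨h, hc⟩)
        · exact ⟨ne_of_lt h, hc⟩
        · exact ⟨(ne_of_lt h).symm, hc⟩
    have hdisj : Disjoint Clt Cgt := by
      rw [Finset.disjoint_left]
      intro p hp hq
      simp only [hClt, hCgt, mem_filter] at hp hq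
      exact absurd hp.2.1 (not_lt.mpr (le_of_lt hq.2.1))
    have hcard : Cgt.card = Clt.card := by
      apply Finset.card_nbij (fun p => Prod.swap p)
      · intro p hp
        simp only [hCgt, Finset.mem_coe, coe_filter, Set.mem_setOf_eq, mem_filter, mem_univ, true_and] at hp
        simp only [hClt, Finset.mem_coe, coe_filter, Set.mem_setOf_eq, mem_filter, mem_univ, true_and, Prod.fst_swap, Prod.snd_swap]
        exact ⟨hp.1, by rw [abs_sub_comm]; exact hp.2⟩
      · exact fun p _ q _ h => Prod.swap_injective h
      · intro p hp
        simp only [hClt, coe_filter, Set.mem_setOf_eq, mem_univ, true_and] at hp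
        refine ⟨p.swap, ?_, Prod.swap_swap p⟩
        simp only [hCgt, coe_filter, Set.mem_setOf_eq, mem_univ, true_and, Prod.fst_swap,
          Prod.snd_swap]
        exact ⟨hp.1, by rw [abs_sub_comm]; exact hp.2⟩
    rw [hunion, Finset.card_union_of_disjoint hdisj, hcard, hcc]
    ring
  -- fiber sums
  have hfibsum : ∑ b ∈ range m, (fib b).card = n := by
    have := Finset.card_eq_sum_card_fiberwise
      (f := B) (s := (univ : Finset (Fin n))) (t := range m)
      (fun x _ => mem_range.mpr (hBlt x))
    rw [← this, card_univ, Fintype.card_fin]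
  have hEcard : D.card + n = ∑ b ∈ range m, (fib b).card * (fib b).card := by
    set E := Finset.univ.filter (fun p : Fin n × Fin n => B p.1 = B p.2) with hE
    have hEfib : E.card = ∑ b ∈ range m, (fib b).card * (fib b).card := by
      have h1 := Finset.card_eq_sum_card_fiberwise
        (f := fun p : Fin n × Fin n => B p.1) (s := E) (t := range m)
        (fun x _ => mem_range.mpr (hBlt x.1))
      rw [h1]
      apply Finset.sum_congr rfl
      intro b _
      have : E.filter (fun p => B p.1 = b) = (fib b) ×ˢ (fib b) := by
        ext ⟨x, y⟩
        simp only [hE, hfib, mem_filter, mem_univ, true_and, mem_product]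
        constructor
        · rintro ⟨h1, h2⟩; omega
        · rintro ⟨h1, h2⟩; omega
      rw [this, Finset.card_product]
    have hDE : D = E \ Finset.diag univ := by
      ext ⟨x, y⟩
      simp only [hD, hE, mem_sdiff, mem_filter, mem_univ, true_and, Finset.mem_diag]
      tauto
    have hdiagsub : Finset.diag univ ⊆ E := by
      intro p hp
      rw [Finset.mem_diag] at hp
      simp only [hE, mem_filter, mem_univ, true_and, hp.2]
    have hdiagcard : (Finset.diag (univ : Finset (Fin n))).card = n := by
      rw [Finset.diag_card, card_univ, Fintype.card_fin]
    rw [hDE, Finset.card_sdiff_of_subset hdiagsub, hdiagcard, ← hEfib]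
    have hle : (Finset.diag (univ : Finset (Fin n))).card ≤ E.card :=
      Finset.card_le_card hdiagsub
    rw [hdiagcard] at hle
    omega
  -- key inequality on C2
  have hmain : m * (k * (k - 1)) + 2 ≤ C2.card := by
    have hkk : m * (k * k) = m * (k * (k - 1)) + m * k := by
      have : k * k = k * (k - 1) + k := by cases k with
        | zero => omega
        | succ k' => simp [Nat.succ_sub_one]; ring
      rw [this, Nat.mul_add]
    by_cases hunif : ∀ b ∈ range m, (fib b).card = k
    · -- uniform case
      have hDcard : D.card = m * (k * (k - 1)) := by
        have : ∑ b ∈ range m, (fib b).card * (fib b).card = m * (k * k) := by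
          rw [Finset.sum_congr rfl (fun b hb => by rw [hunif b hb]),
            Finset.sum_const, card_range, smul_eq_mul]
        omega
      by_cases hcross : ∃ u v : Fin n, u ≠ v ∧ |(d u : ℤ) - (d v : ℤ)| < k ∧ B u ≠ B v
      · obtain ⟨u, v, huv, hcl, hBne⟩ := hcross
        have h1 : (u, v) ∈ C2 := by
          simp only [hC2, mem_filter, mem_univ, true_and]; exact ⟨huv, hcl⟩
        have h2 : (v, u) ∈ C2 := by
          simp only [hC2, mem_filter, mem_univ, true_and]
          exact ⟨huv.symm, by rw [abs_sub_comm]; exact hcl⟩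
        have h1D : (u, v) ∉ D := by
          simp only [hD, mem_filter, mem_univ, true_and]; tauto
        have h2D : (v, u) ∉ D := by
          simp only [hD, mem_filter, mem_univ, true_and]
          intro h; exact hBne h.2.symm
        have hss : insert (u, v) (insert (v, u) D) ⊆ C2 := by
          intro p hp
          simp only [mem_insert] at hp
          rcases hp with rfl | rfl | hp
          · exact h1
          · exact h2
          · exact hDsub hp
        have hne1 : (u, v) ∉ insert (v, u) D := by
          simp only [mem_insert]
          rintro (h | h)
          · exact huv (congrArg Prod.fst h)
          · exact h1D h
        have hc := Finset.card_le_card hss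
        rw [Finset.card_insert_of_notMem hne1, Finset.card_insert_of_notMem h2D,
          hDcard] at hc
        omega
      · -- no cross-bucket close pair: contradiction
        exfalso
        push_neg at hcross
        -- far lemma
        have hfar : ∀ x y : Fin n, B y < B x → d y + k ≤ d x := by
          intro x y hBxy
          have hxy : x ≠ y := by intro h; rw [h] at hBxy; omega
          have hnotclose : ¬ |(d x : ℤ) - (d y : ℤ)| < k := by
            intro h
            exact absurd (hcross x y hxy h) (by omega)
          simp only [hB] at hBxy
          have hdyx : d y < d x := by
            have h5 := Nat.lt_of_div_lt_div hBxy
            have hax := ha x; have hay := ha y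
            omega
          rw [not_lt] at hnotclose
          rcases abs_cases ((d x : ℤ) - (d y : ℤ)) with ⟨he, _⟩ | ⟨he, _⟩ <;>
            rw [he] at hnotclose <;> omega
        -- max degree in fiber 0
        have hfib0ne : (fib 0).Nonempty := by
          rw [← Finset.card_pos, hunif 0 (mem_range.mpr (by omega))]; omega
        obtain ⟨u, huL, hu⟩ := Finset.exists_max_image (fib 0) d hfib0ne
        set A := d u with hA
        -- chain
        have hchain : ∀ t, 1 ≤ t → t < m → ∀ x ∈ fib t, A + t * k ≤ d x := by
          intro t
          induction t with
          | zero => omega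
          | succ t ih =>
            intro h1 hlt x hx
            have hBx : B x = t + 1 := by
              simp only [hfib, mem_filter] at hx; exact hx.2
            rcases Nat.eq_or_lt_of_le h1 with h | h
            · -- t + 1 = 1, i.e. t = 0
              have ht0 : t = 0 := by omega
              subst ht0
              have hBu : B u = 0 := by
                simp only [hfib, mem_filter] at huL; exact huL.2
              have := hfar x u (by omega)
              omega
            · have ht1 : 1 ≤ t := by omega
              have hfibtne : (fib t).Nonempty := by
                rw [← Finset.card_pos, hunif t (mem_range.mpr (by omega))]; omega
              obtain ⟨y, hy⟩ := hfibtne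
              have hBy : B y = t := by
                simp only [hfib, mem_filter] at hy; exact hy.2
              have hih := ih ht1 (by omega) y hy
              have := hfar x y (by omega)
              have : (t + 1) * k = t * k + k := by ring
              omega
        -- fiber m-1 nonempty, bound A
        have hfibT : (fib (m - 1)).card = k := hunif (m - 1) (mem_range.mpr (by omega))
        have hfibTne : (fib (m - 1)).Nonempty := by
          rw [← Finset.card_pos, hfibT]; omega
        have hchainT : ∀ x ∈ fib (m - 1), A + (m - 1) * k ≤ d x :=
          hchain (m - 1) (by omega) (by omega)
        have hAk : A < k := by
          obtain ⟨w, hw⟩ := hfibTne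
          have h1 := hchainT w hw
          have h2 := hdlt w
          have h3 : (m - 1) * k + k = m * k := by
            have : m - 1 + 1 = m := by omega
            calc (m - 1) * k + k = (m - 1 + 1) * k := by ring
              _ = m * k := by rw [this]
          omega
        -- double counting non-edges between fib (m-1) and fib 0
        set N := ((fib (m - 1)) ×ˢ (fib 0)).filter (fun p => ¬ G.Adj p.1 p.2) with hN
        have hNcard : N.card =
            ∑ v ∈ fib (m - 1), ∑ w ∈ fib 0, if ¬ G.Adj v w then 1 else 0 := by
          rw [hN, Finset.card_filter, Finset.sum_product]
        -- upper bound
        have hupper : N.card ≤ k * (k - 1 - A) := by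
          rw [hNcard]
          have hrow : ∀ v ∈ fib (m - 1),
              (∑ w ∈ fib 0, if ¬ G.Adj v w then 1 else 0) ≤ k - 1 - A := by
            intro v hv
            rw [← Finset.card_filter]
            have hvd : A + (m - 1) * k ≤ d v := hchainT v hv
            have hsub : (fib 0).filter (fun w => ¬ G.Adj v w) ⊆
                univ \ insert v (G.neighborFinset v) := by
              intro w hw
              simp only [hfib, mem_filter, mem_univ, true_and] at hw
              simp only [mem_sdiff, mem_univ, true_and, mem_insert,
                SimpleGraph.mem_neighborFinset]
              rintro (h | hadj)
              · have hBv : B v = m - 1 := by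
                  simp only [hfib, mem_filter] at hv; exact hv.2
                rw [h] at hw
                omega
              · exact hw.2 hadj
            have hcs : (univ \ insert v (G.neighborFinset v)).card = n - 1 - d v := by
              rw [Finset.card_sdiff_of_subset (Finset.subset_univ _), card_univ, Fintype.card_fin,
                Finset.card_insert_of_notMem (by simp), SimpleGraph.card_neighborFinset_eq_degree]
              simp only [hd]
              omega
            have := Finset.card_le_card hsub
            rw [hcs] at this
            have h3 : (m - 1) * k + k = m * k := by
              have hmm : m - 1 + 1 = m := by omega
              calc (m - 1) * k + k = (m - 1 + 1) * k := by ring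
                _ = m * k := by rw [hmm]
            omega
          calc (∑ v ∈ fib (m-1), ∑ w ∈ fib 0, if ¬ G.Adj v w then 1 else 0)
              ≤ ∑ v ∈ fib (m-1), (k - 1 - A) := Finset.sum_le_sum hrow
            _ = k * (k - 1 - A) := by rw [Finset.sum_const, hfibT, smul_eq_mul]
        -- lower bound
        have hfibL : (fib 0).card = k := hunif 0 (mem_range.mpr (by omega))
        have hlower : k * (k - A) ≤ N.card := by
          rw [hNcard, Finset.sum_comm]
          have hcol : ∀ w ∈ fib 0,
              k - A ≤ (∑ v ∈ fib (m - 1), if ¬ G.Adj v w then 1 else 0) := by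
            intro w hw
            rw [← Finset.card_filter]
            have hdw : d w ≤ A := hu w hw
            have hadjsub : (fib (m - 1)).filter (fun v => G.Adj v w) ⊆
                G.neighborFinset w := by
              intro v hv
              simp only [mem_filter] at hv
              rw [SimpleGraph.mem_neighborFinset]
              exact hv.2.symm
            have hadjcard : ((fib (m - 1)).filter (fun v => G.Adj v w)).card ≤ A := by
              have := Finset.card_le_card hadjsub
              rw [SimpleGraph.card_neighborFinset_eq_degree] at this
              simp only [hd] at hdw ⊢
              omega
            have hsplit := Finset.card_filter_add_card_filter_not
              (s := fib (m - 1)) (p := fun v => G.Adj v w)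
            rw [hfibT] at hsplit
            omega
          calc k * (k - A) = ∑ w ∈ fib 0, (k - A) := by
                rw [Finset.sum_const, hfibL, smul_eq_mul]
            _ ≤ _ := Finset.sum_le_sum hcol
        have : k - A ≤ k - 1 - A := Nat.le_of_mul_le_mul_left (le_trans hlower hupper) hk0
        omega
    · -- nonuniform case
      push_neg at hunif
      obtain ⟨b0, hb0, hb0ne⟩ := hunif
      have hconv : m * (k * k) + 2 ≤ ∑ b ∈ range m, (fib b).card * (fib b).card :=
        convex_aux m k (fun b => (fib b).card) (by rw [hfibsum, hmk]) b0 hb0 hb0ne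
      have hD2 : m * (k * (k - 1)) + 2 ≤ D.card := by omega
      calc m * (k * (k - 1)) + 2 ≤ D.card := hD2
        _ ≤ C2.card := Finset.card_le_card hDsub
  -- finish
  rw [hdivk]
  have hch : 2 * Nat.choose k 2 = k * (k - 1) := by
    rw [Nat.choose_two_right]
    have := Nat.even_mul_pred_self k
    obtain ⟨c, hc⟩ := this
    omega
  have h2 : 2 * (m * Nat.choose k 2) = m * (k * (k - 1)) := by
    rw [← hch]; ring
  rw [hdouble] at hmain
  linarith
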